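/- Let a, b be real numbers with b ≠ 0, let ψ : ℝ² → ℝ be twice continuously differentiable near the origin with ψ(0,0) = 0 and ψ_u(0,0) = ψ_v(0,0) = 0, and set λ₁ = −(1/2)·[ψ_uu(0,0) − 2·(a/b)·ψ_uv(0,0) + (a/b)²·ψ_vv(0,0)]. Suppose φ : ℝ → ℝ is twice continuously differentiable near 0 with φ(0) = 0 and b·φ(u) + b·ψ(u, (φ(u) − a·u)/b) = 0 for all u near 0, and suppose h : ℝ → ℝ satisfies h(u) = λ₁·u² + O(|u|³) as u → 0. Then h(u) − φ(u) = o(u²) as u → 0; in particular, if λ₁ ≠ 0, then lim_{u→0} h(u)/φ(u) = 1. -/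

import Mathlib

open Topology Asymptotics Filter

private lemma aux_div_div (x y z : ℝ) (hz : z ≠ 0) : (x / z) / (y / z) = x / y := by
  rcases eq_or_ne y 0 with rfl | h
  · simp
  · field_simp

theorem stmt_1 (a b : ℝ) (hb : b ≠ 0)
    (ψ : ℝ × ℝ → ℝ)
    (hψ : ContDiffAt ℝ 2 ψ (0, 0))
    (hψ0 : ψ (0, 0) = 0)
    (hψu : fderiv ℝ ψ (0, 0) (1, 0) = 0)
    (hψv : fderiv ℝ ψ (0, 0) (0, 1) = 0)
    (lam1 : ℝ)
    (hlam1 : lam1 = -(1 / 2) *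
      (fderiv ℝ (fun p => fderiv ℝ ψ p (1, 0)) (0, 0) (1, 0)
        - 2 * (a / b) * fderiv ℝ (fun p => fderiv ℝ ψ p (1, 0)) (0, 0) (0, 1)
        + (a / b) ^ 2 * fderiv ℝ (fun p => fderiv ℝ ψ p (0, 1)) (0, 0) (0, 1)))
    (φ : ℝ → ℝ)
    (hφ : ContDiffAt ℝ 2 φ 0)
    (hφ0 : φ 0 = 0)
    (hroot : ∀ᶠ u in 𝓝 (0 : ℝ),
      b * φ u + b * ψ (u, (φ u - a * u) / b) = 0)
    (h : ℝ → ℝ)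
    (hh : (fun u => h u - lam1 * u ^ 2) =O[𝓝 (0 : ℝ)] (fun u => |u| ^ 3)) :
    (fun u => h u - φ u) =o[𝓝 (0 : ℝ)] (fun u => u ^ 2) ∧
      (lam1 ≠ 0 →
        Tendsto (fun u => h u / φ u) (𝓝[≠] (0 : ℝ)) (𝓝 1)) := by
  -- the curve u ↦ (u, v(u))
  have hγ0 : ((0:ℝ), (φ 0 - a * 0) / b) = ((0:ℝ), (0:ℝ)) := by simp [hφ0]
  -- eventual functional equation  φ u = -ψ (γ u)
  have E1 : ∀ᶠ u in 𝓝 (0:ℝ), φ u = -ψ (u, (φ u - a * u) / b) := by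
    filter_upwards [hroot] with u hu
    have h2 : b * (φ u + ψ (u, (φ u - a * u) / b)) = 0 := by linear_combination hu
    have h3 := (mul_eq_zero.mp h2).resolve_left hb
    linarith [h3]
  have hφev : ∀ᶠ u in 𝓝 (0:ℝ), ContDiffAt ℝ 2 φ u := hφ.eventually (by simp)
  have hψev : ∀ᶠ p in 𝓝 ((0:ℝ),(0:ℝ)), ContDiffAt ℝ 2 ψ p := hψ.eventually (by simp)
  have hγcont : Tendsto (fun u => ((u, (φ u - a * u) / b) : ℝ × ℝ)) (𝓝 0) (𝓝 ((0:ℝ),(0:ℝ))) := by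
    rw [← hγ0]
    exact (continuousAt_id.prodMk
      ((hφ.continuousAt.sub (continuousAt_const.mul continuousAt_id)).div_const b))
  have hψγ : ∀ᶠ u in 𝓝 (0:ℝ), ContDiffAt ℝ 2 ψ (u, (φ u - a * u) / b) := hγcont.eventually hψev
  -- eventual derivative formula
  have E5 : ∀ᶠ u in 𝓝 (0:ℝ),
      deriv φ u = -(fderiv ℝ ψ (u, (φ u - a * u) / b)) (1, (deriv φ u - a) / b) := by
    filter_upwards [hφev, hψγ, E1.eventually_nhds] with u hφu hψu hE
    have hφd : HasDerivAt φ (deriv φ u) u := (hφu.differentiableAt (by norm_num)).hasDerivAt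
    have hγd : HasDerivAt (fun x => ((x, (φ x - a * x) / b) : ℝ × ℝ))
        (1, (deriv φ u - a) / b) u := by
      refine (hasDerivAt_id u).prodMk ?_
      simpa using ((hφd.sub ((hasDerivAt_id u).const_mul a)).div_const b)
    have hcomp : HasDerivAt (fun x => -ψ (x, (φ x - a * x) / b))
        (-(fderiv ℝ ψ (u, (φ u - a * u) / b)) (1, (deriv φ u - a) / b)) u :=
      (((hψu.differentiableAt (by norm_num)).hasFDerivAt).comp_hasDerivAt u hγd).neg
    exact (hcomp.congr_of_eventuallyEq hE).deriv
  -- the total first derivative of ψ at the origin vanishes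
  have hL0 : ∀ v : ℝ × ℝ, fderiv ℝ ψ (0,0) v = 0 := by
    intro v
    have hv : v = v.1 • ((1:ℝ),(0:ℝ)) + v.2 • ((0:ℝ),(1:ℝ)) := by
      simp [Prod.ext_iff]
    rw [hv, map_add, map_smul, map_smul, hψu, hψv]
    simp
  -- first derivative of φ at 0 vanishes
  have hderiv0 : deriv φ 0 = 0 := by
    have h2 := E5.self_of_nhds
    rw [hγ0, hL0] at h2
    simpa using h2
  -- second derivative of fderiv ψ, and differentiability facts
  have hBd : DifferentiableAt ℝ (fderiv ℝ ψ) (0,0) :=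
    (hψ.fderiv_right (m := 1) (by norm_num)).differentiableAt (by norm_num)
  have hDφdiff : DifferentiableAt ℝ (deriv φ) 0 := by
    have h1 : DifferentiableAt ℝ (fderiv ℝ φ) 0 :=
      (hφ.fderiv_right (m := 1) (by norm_num)).differentiableAt (by norm_num)
    have h2 : deriv φ = fun u => fderiv ℝ φ u 1 := by
      funext u; rw [fderiv_apply_one_eq_deriv]
    rw [h2]
    exact h1.clm_apply (differentiableAt_const 1)
  have hDc : HasDerivAt (deriv φ) (deriv (deriv φ) 0) 0 := hDφdiff.hasDerivAt
  -- derivative of the curve at 0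
  have hφd0 : HasDerivAt φ 0 0 := by
    have := (hφ.differentiableAt (by norm_num)).hasDerivAt
    rwa [hderiv0] at this
  have hγd0 : HasDerivAt (fun x => ((x, (φ x - a * x) / b) : ℝ × ℝ)) (1, -a/b) 0 := by
    refine (hasDerivAt_id 0).prodMk ?_
    have h2 := (hφd0.sub ((hasDerivAt_id 0).const_mul a)).div_const b
    rw [show -a/b = (0 - a * 1)/b by ring]
    exact h2
  -- derivative of u ↦ fderiv ψ (γ u) at 0
  have hF : HasFDerivAt (fderiv ℝ ψ) (fderiv ℝ (fderiv ℝ ψ) (0,0)) ((0:ℝ), (φ 0 - a * 0) / b) := by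
    rw [hγ0]; exact hBd.hasFDerivAt
  have hFd : HasDerivAt (fun u => fderiv ℝ ψ (u, (φ u - a * u) / b))
      (fderiv ℝ (fderiv ℝ ψ) (0,0) (1, -a/b)) 0 :=
    hF.comp_hasDerivAt 0 hγd0
  have hGd : HasDerivAt (fun u => (((1:ℝ), (deriv φ u - a)/b) : ℝ × ℝ))
      ((0:ℝ), deriv (deriv φ) 0 / b) 0 := by
    refine (hasDerivAt_const 0 (1:ℝ)).prodMk ?_
    exact (hDc.sub_const a).div_const b
  have happ := hFd.clm_apply hGd
  -- simplify the value of the derivative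
  have hval : fderiv ℝ (fderiv ℝ ψ) (0,0) (1, -a/b) ((1:ℝ), (deriv φ 0 - a)/b)
      + (fderiv ℝ ψ ((0:ℝ), (φ 0 - a * 0) / b)) ((0:ℝ), deriv (deriv φ) 0 / b)
      = fderiv ℝ (fderiv ℝ ψ) (0,0) (1, -a/b) (1, -a/b) := by
    rw [hderiv0, hγ0, hL0]
    simp [zero_sub, neg_div]
  have hkey : HasDerivAt (deriv φ)
      (-(fderiv ℝ (fderiv ℝ ψ) (0,0) (1, -a/b) (1, -a/b))) 0 := by
    have h2 := happ.neg
    rw [hval] at h2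
    exact h2.congr_of_eventuallyEq E5
  -- identify the second derivative with 2·lam1
  have hBapp : ∀ w z : ℝ × ℝ,
      fderiv ℝ (fun p => fderiv ℝ ψ p w) (0,0) z = fderiv ℝ (fderiv ℝ ψ) (0,0) z w := by
    intro w z
    rw [fderiv_clm_apply hBd (differentiableAt_const w)]
    simp
  have hsym := hψ.isSymmSndFDerivAt (by simp [minSmoothness_of_isRCLikeNormedField])
  have hBee : fderiv ℝ (fderiv ℝ ψ) (0,0) (1, -a/b) (1, -a/b) = -(2*lam1) := by
    have hsplit : ((1:ℝ), -a/b) = ((1:ℝ),(0:ℝ)) + (-(a/b)) • ((0:ℝ),(1:ℝ)) := by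
      simp [Prod.ext_iff]
      ring
    rw [hlam1, hBapp, hBapp, hBapp, hsplit]
    simp only [map_add, map_smul, ContinuousLinearMap.add_apply,
      ContinuousLinearMap.smul_apply, smul_eq_mul]
    rw [hsym ((0:ℝ),(1:ℝ)) ((1:ℝ),(0:ℝ))]
    ring
  have hkey2 : HasDerivAt (deriv φ) (2*lam1) 0 := by
    rw [hBee] at hkey
    simpa using hkey
  -- limit of φ u / u² via L'Hôpital
  have hslope : Tendsto (fun u => deriv φ u / u) (𝓝[≠] (0:ℝ)) (𝓝 (2*lam1)) := by
    have h2 := hasDerivAt_iff_tendsto_slope.mp hkey2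
    refine h2.congr' ?_
    filter_upwards with u
    simp [slope_def_field, hderiv0]
  have hI : Tendsto (fun u => φ u / u^2) (𝓝[≠] (0:ℝ)) (𝓝 lam1) := by
    refine HasDerivAt.lhopital_zero_nhdsNE (f' := deriv φ) (g' := fun u => 2*u)
      ?_ ?_ ?_ ?_ ?_ ?_
    · exact ((hφev.mono fun u hu => (hu.differentiableAt (by norm_num)).hasDerivAt).filter_mono
        nhdsWithin_le_nhds)
    · filter_upwards with x
      simpa using hasDerivAt_pow 2 x
    · filter_upwards [self_mem_nhdsWithin] with x hx
      exact mul_ne_zero two_ne_zero hx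
    · have := hφ.continuousAt.tendsto
      rw [hφ0] at this
      exact this.mono_left nhdsWithin_le_nhds
    · have : Tendsto (fun u : ℝ => u^2) (𝓝 0) (𝓝 ((0:ℝ)^2)) := (continuous_pow 2).tendsto 0
      rw [show ((0:ℝ)^2 = 0) by norm_num] at this
      exact this.mono_left nhdsWithin_le_nhds
    · have h2 := hslope.const_mul (1/2 : ℝ)
      have h3 : (1/2 : ℝ) * (2*lam1) = lam1 := by ring
      rw [h3] at h2
      refine h2.congr' ?_
      filter_upwards with u
      ring
  -- o-estimates
  have hoφ : (fun u => φ u - lam1*u^2) =o[𝓝 (0:ℝ)] fun u : ℝ => u^2 := by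
    rw [← nhdsNE_sup_pure (0:ℝ), isLittleO_sup]
    constructor
    · rw [isLittleO_iff_tendsto']
      · have h2 := hI.sub_const lam1
        rw [sub_self] at h2
        refine h2.congr' ?_
        filter_upwards [self_mem_nhdsWithin] with u hu
        have hu2 : (u:ℝ)^2 ≠ 0 := pow_ne_zero _ hu
        rw [sub_div, mul_div_cancel_right₀ _ hu2]
      · filter_upwards [self_mem_nhdsWithin] with u hu h2
        exact absurd h2 (pow_ne_zero _ hu)
    · exact isLittleO_pure.2 (by simp [hφ0])
  have hcube : (fun u : ℝ => |u|^3) =o[𝓝 (0:ℝ)] fun u : ℝ => u^2 := by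
    rw [isLittleO_iff_tendsto]
    · have h2 : (fun u : ℝ => |u|^3/u^2) = fun u => |u| := by
        funext u
        rcases eq_or_ne u 0 with rfl | hu
        · simp
        · rw [← sq_abs, pow_succ, sq, mul_comm]
          field_simp
      rw [h2]
      simpa using continuous_abs.tendsto (0:ℝ)
    · intro x hx
      rw [pow_eq_zero_iff (by norm_num)] at hx
      simp [hx]
  have hoh : (fun u => h u - lam1*u^2) =o[𝓝 (0:ℝ)] fun u : ℝ => u^2 := hh.trans_isLittleO hcube
  have hmain : (fun u => h u - φ u) =o[𝓝 (0:ℝ)] fun u : ℝ => u^2 := by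
    refine (hoh.sub hoφ).congr' ?_ EventuallyEq.rfl
    filter_upwards with u
    ring
  refine ⟨hmain, fun hlam => ?_⟩
  have hh2 : Tendsto (fun u => h u/u^2) (𝓝[≠] (0:ℝ)) (𝓝 lam1) := by
    have h0 := (hoh.tendsto_div_nhds_zero).mono_left
      (nhdsWithin_le_nhds : 𝓝[≠] (0:ℝ) ≤ 𝓝 0)
    have h1 := h0.add_const lam1
    rw [zero_add] at h1
    refine h1.congr' ?_
    filter_upwards [self_mem_nhdsWithin] with u hu
    have hu2 : (u:ℝ)^2 ≠ 0 := pow_ne_zero _ hu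
    rw [sub_div, mul_div_cancel_right₀ _ hu2]
    ring
  have hdiv := hh2.div hI hlam
  rw [div_self hlam] at hdiv
  refine Tendsto.congr' ?_ hdiv
  filter_upwards [self_mem_nhdsWithin] with u hu
  exact aux_div_div (h u) (φ u) (u^2) (pow_ne_zero _ hu)
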